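/- Let a2, gamma, h, c, betastar, k, sigma2 > 0. Then there exist constants M3, M4 > 0 such that for all x >= 0 and all S, I > 0, with beta(S,I) = betastar/(S + I + k): 2*S^2*( a2 - (1/(x + c) + h)*(S + I) ) - 2*beta(S,I)*I*S^2 + 2*gamma*I*S - ( a2 - (1/(x + c) + h)*(S + I) ) + beta(S,I)*I - gamma*I/S + sigma2^2*S^2 + (1/2)*sigma2^2 <= M3*(S^2 - ln S) + (1/2)*M3*(I^2 - ln I) + M4. -/
import Mathlib

private lemma aux_at (a t : ℝ) : a * t ≤ t ^ 2 + a ^ 2 := by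
  nlinarith [sq_nonneg (t - a), sq_nonneg (t + a)]

private lemma aux_key (a2 gamma h betastar sigma2 L S I : ℝ)
    (ha2 : 0 < a2) (hgamma : 0 < gamma) (hh : 0 < h) (hbetastar : 0 < betastar)
    (hsigma2 : 0 < sigma2) (hL0 : 0 < L) (hS : 0 < S) (hI : 0 < I)
    (M3 M4 : ℝ) (hM3 : M3 = 2 * (a2 + gamma + sigma2 ^ 2 + L + h + 1))
    (hM4 : M4 = 1 + betastar + sigma2 ^ 2 + (L + h + M3) ^ 2 + (L + h + M3 / 2) ^ 2) :
    2 * a2 * S ^ 2 + 2 * gamma * I * S + (L + h) * (S + I) + betastar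
      + sigma2 ^ 2 * S ^ 2 + (1 / 2) * sigma2 ^ 2
      ≤ M3 * S ^ 2 - M3 * (S - 1) + (1 / 2) * M3 * I ^ 2 - (1 / 2) * M3 * (I - 1) + M4 := by
  have h1 : (L + h + M3) * S ≤ S ^ 2 + (L + h + M3) ^ 2 := aux_at _ _
  have h2 : (L + h + M3 / 2) * I ≤ I ^ 2 + (L + h + M3 / 2) ^ 2 := aux_at _ _
  have h3 : 2 * gamma * I * S ≤ gamma * S ^ 2 + gamma * I ^ 2 := by
    nlinarith [mul_nonneg hgamma.le (sq_nonneg (S - I))]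
  have h4 : 0 ≤ (gamma + sigma2 ^ 2 + 2 * L + 2 * h) * S ^ 2 := by positivity
  have h5 : 0 ≤ (a2 + sigma2 ^ 2 + L + h) * I ^ 2 := by positivity
  have h6 : (0:ℝ) ≤ S ^ 2 := sq_nonneg S
  subst hM3 hM4
  nlinarith [h1, h2, h3, h4, h5, h6]

theorem stmt_17 (a2 gamma h c betastar k sigma2 : ℝ) (ha2 : 0 < a2)
    (hgamma : 0 < gamma) (hh : 0 < h) (hc : 0 < c) (hbetastar : 0 < betastar)
    (hk : 0 < k) (hsigma2 : 0 < sigma2) :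
    ∃ M3 M4 : ℝ, 0 < M3 ∧ 0 < M4 ∧ ∀ x S I : ℝ, 0 ≤ x → 0 < S → 0 < I →
      2 * S ^ 2 * (a2 - (1 / (x + c) + h) * (S + I))
        - 2 * (betastar / (S + I + k)) * I * S ^ 2 + 2 * gamma * I * S
        - (a2 - (1 / (x + c) + h) * (S + I))
        + (betastar / (S + I + k)) * I - gamma * I / S
        + sigma2 ^ 2 * S ^ 2 + (1 / 2) * sigma2 ^ 2
      ≤ M3 * (S ^ 2 - Real.log S) + (1 / 2) * M3 * (I ^ 2 - Real.log I) + M4 := by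
  obtain ⟨L, hL⟩ : ∃ L : ℝ, L = 1 / c := ⟨_, rfl⟩
  have hL0 : 0 < L := by rw [hL]; positivity
  obtain ⟨M3, hM3⟩ : ∃ M3 : ℝ, M3 = 2 * (a2 + gamma + sigma2 ^ 2 + L + h + 1) := ⟨_, rfl⟩
  have hM30 : 0 < M3 := by rw [hM3]; positivity
  obtain ⟨M4, hM4⟩ : ∃ M4 : ℝ,
      M4 = 1 + betastar + sigma2 ^ 2 + (L + h + M3) ^ 2 + (L + h + M3 / 2) ^ 2 := ⟨_, rfl⟩
  have hM40 : 0 < M4 := by rw [hM4]; positivity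
  refine ⟨M3, M4, hM30, hM40, fun x S I hx hS hI => ?_⟩
  have hxc : 0 < x + c := by linarith
  have hu0 : 0 < 1 / (x + c) := by positivity
  have hu : 1 / (x + c) ≤ L := by
    rw [hL]
    exact one_div_le_one_div_of_le hc (by linarith)
  have hSIk : 0 < S + I + k := by linarith
  have hbeta : betastar / (S + I + k) * I ≤ betastar := by
    rw [div_mul_eq_mul_div, div_le_iff₀ hSIk]
    nlinarith
  have hbS : 0 ≤ 2 * (betastar / (S + I + k)) * I * S ^ 2 := by positivity
  have hgIS : 0 ≤ gamma * I / S := by positivity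
  have hlogS : Real.log S ≤ S - 1 := Real.log_le_sub_one_of_pos hS
  have hlogI : Real.log I ≤ I - 1 := Real.log_le_sub_one_of_pos hI
  have hA : 2 * S ^ 2 * (a2 - (1 / (x + c) + h) * (S + I)) ≤ 2 * a2 * S ^ 2 := by
    have : 0 ≤ (1 / (x + c) + h) * (S + I) * S ^ 2 := by positivity
    nlinarith
  have hB : -(a2 - (1 / (x + c) + h) * (S + I)) ≤ (L + h) * (S + I) := by
    have : (1 / (x + c) + h) * (S + I) ≤ (L + h) * (S + I) :=
      mul_le_mul_of_nonneg_right (by linarith) (by linarith)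
    linarith
  have key := aux_key a2 gamma h betastar sigma2 L S I ha2 hgamma hh hbetastar
    hsigma2 hL0 hS hI M3 M4 hM3 hM4
  have hRS : M3 * S ^ 2 - M3 * (S - 1) ≤ M3 * (S ^ 2 - Real.log S) := by
    have := mul_le_mul_of_nonneg_left hlogS hM30.le
    ring_nf
    ring_nf at this
    linarith
  have hRI : (1 / 2) * M3 * I ^ 2 - (1 / 2) * M3 * (I - 1)
      ≤ (1 / 2) * M3 * (I ^ 2 - Real.log I) := by
    have := mul_le_mul_of_nonneg_left hlogI hM30.le
    ring_nf
    ring_nf at this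
    linarith
  linarith
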